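/- arXiv:2502.07350 — 2 statements merged into one kernel-verified Lean document; each statement's English description precedes it below -/
import Mathlib

section
/- Let A, B, T be finite sets (in a type with decidable equality) such that A ∪ T, B ∪ T, and (A ∪ B) ∪ T are nonempty. Then the Jaccard dissimilarity satisfies 1 − J(A ∪ B, T) ≤ 2·[(1 − J(A, T)) + (1 − J(B, T))], where J(X,Y) = |X ∩ Y| / |X ∪ Y| as real numbers. -/
open Finset
open scoped symmDiff

lemma symmDiff_card_aux {α : Type*} [DecidableEq α] (X T : Finset α) :
    ((X ∆ T).card : ℕ) + (X ∩ T).card = (X ∪ T).card := by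
  rw [← card_union_of_disjoint]
  · congr 1
    ext x
    simp [Finset.mem_symmDiff]
    tauto
  · rw [Finset.disjoint_left]
    intro x hx hx2
    simp [Finset.mem_symmDiff] at hx hx2
    tauto

lemma symmDiff_union_subset {α : Type*} [DecidableEq α] (A B T : Finset α) :
    (A ∪ B) ∆ T ⊆ (A ∆ T) ∪ (B ∆ T) := by
  intro x hx
  simp [Finset.mem_symmDiff] at hx ⊢
  tauto

lemma diss_eq {α : Type*} [DecidableEq α] (X T : Finset α) (h : (X ∪ T).Nonempty) :
    1 - ((X ∩ T).card : ℝ) / ((X ∪ T).card : ℝ) = ((X ∆ T).card : ℝ) / ((X ∪ T).card : ℝ) := by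
  have hc := symmDiff_card_aux X T
  have h0 : ((X ∪ T).card : ℝ) ≠ 0 := by
    exact_mod_cast (Finset.card_pos.mpr h).ne'
  field_simp
  push_cast [← hc]
  ring

theorem jaccard_subadditivity {α : Type*} [DecidableEq α] (A B T : Finset α)
    (hA : (A ∪ T).Nonempty) (hB : (B ∪ T).Nonempty) (hAB : ((A ∪ B) ∪ T).Nonempty) :
    1 - ((((A ∪ B) ∩ T).card : ℝ) / (((A ∪ B) ∪ T).card : ℝ)) ≤
      2 * ((1 - ((A ∩ T).card : ℝ) / ((A ∪ T).card : ℝ)) +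
           (1 - ((B ∩ T).card : ℝ) / ((B ∪ T).card : ℝ))) := by
  have hDA : (0:ℝ) < (A ∪ T).card := by exact_mod_cast Finset.card_pos.mpr hA
  have hDB : (0:ℝ) < (B ∪ T).card := by exact_mod_cast Finset.card_pos.mpr hB
  have hD : (0:ℝ) < ((A ∪ B) ∪ T).card := by exact_mod_cast Finset.card_pos.mpr hAB
  have eA := diss_eq A T hA
  have eB := diss_eq B T hB
  have eAB := diss_eq (A ∪ B) T hAB
  rw [eA, eB, eAB]
  have hsub : (((A ∪ B) ∆ T).card : ℝ) ≤ ((A ∆ T).card : ℝ) + ((B ∆ T).card : ℝ) := by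
    have h1 : ((A ∪ B) ∆ T).card ≤ ((A ∆ T) ∪ (B ∆ T)).card :=
      Finset.card_le_card (symmDiff_union_subset A B T)
    have h2 : ((A ∆ T) ∪ (B ∆ T)).card ≤ (A ∆ T).card + (B ∆ T).card :=
      Finset.card_union_le _ _
    exact_mod_cast h1.trans h2
  have hA' : ((A ∆ T).card : ℝ) / (((A ∪ B) ∪ T).card : ℝ) ≤
      ((A ∆ T).card : ℝ) / ((A ∪ T).card : ℝ) := by
    apply div_le_div_of_nonneg_left (by positivity) hDA
    exact_mod_cast Finset.card_le_card (by intro x hx; simp at hx ⊢; tauto)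
  have hB' : ((B ∆ T).card : ℝ) / (((A ∪ B) ∪ T).card : ℝ) ≤
      ((B ∆ T).card : ℝ) / ((B ∪ T).card : ℝ) := by
    apply div_le_div_of_nonneg_left (by positivity) hDB
    exact_mod_cast Finset.card_le_card (by intro x hx; simp at hx ⊢; tauto)
  have key : (((A ∪ B) ∆ T).card : ℝ) / (((A ∪ B) ∪ T).card : ℝ) ≤
      ((A ∆ T).card : ℝ) / ((A ∪ T).card : ℝ) + ((B ∆ T).card : ℝ) / ((B ∪ T).card : ℝ) := by
    calc (((A ∪ B) ∆ T).card : ℝ) / (((A ∪ B) ∪ T).card : ℝ)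
        ≤ (((A ∆ T).card : ℝ) + ((B ∆ T).card : ℝ)) / (((A ∪ B) ∪ T).card : ℝ) := by
          apply div_le_div_of_nonneg_right hsub hD.le |>.trans_eq rfl
      _ = ((A ∆ T).card : ℝ) / (((A ∪ B) ∪ T).card : ℝ) +
          ((B ∆ T).card : ℝ) / (((A ∪ B) ∪ T).card : ℝ) := add_div _ _ _
      _ ≤ _ := add_le_add hA' hB'
  have hnn : (0:ℝ) ≤ ((A ∆ T).card : ℝ) / ((A ∪ T).card : ℝ) +
      ((B ∆ T).card : ℝ) / ((B ∪ T).card : ℝ) := by positivity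
  linarith
end

section
/- Let A, B, C be finite sets (in a type with decidable equality) such that A ∪ B, B ∪ C, and A ∪ C are nonempty. Then the Jaccard dissimilarity satisfies the triangle inequality: 1 − J(A, C) ≤ (1 − J(A, B)) + (1 − J(B, C)), where J(X,Y) = |X ∩ Y| / |X ∪ Y| as real numbers. -/
open Finset

private lemma key_ineq (a b c x y z : ℝ) (ha : 0 ≤ a) (hb : 0 ≤ b) (hc : 0 ≤ c)
    (hx : 0 ≤ x) (hz : 0 ≤ z)
    (h1 : c ≤ a + b) (h2 : y ≤ z + b) (h3 : y ≤ x + a)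
    (d1 : 0 < x + y + a) (d2 : 0 < y + z + b) (d3 : 0 < x + z + c) :
    c / (x + z + c) ≤ a / (x + y + a) + b / (y + z + b) := by
  have hD : 0 < x + z + (a + b) := by linarith
  have step1 : c / (x + z + c) ≤ (a + b) / (x + z + (a + b)) := by
    rw [div_le_div_iff₀ d3 hD]
    nlinarith
  have step2 : (a + b) / (x + z + (a + b)) = a / (x + z + (a + b)) + b / (x + z + (a + b)) := by
    rw [add_div]
  have stepa : a / (x + z + (a + b)) ≤ a / (x + y + a) := by
    apply div_le_div_of_nonneg_left ha d1; linarith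
  have stepb : b / (x + z + (a + b)) ≤ b / (y + z + b) := by
    apply div_le_div_of_nonneg_left hb d2; linarith
  linarith

private lemma card_symmDiff_eq {α : Type*} [DecidableEq α] (A B : Finset α) :
    ((symmDiff A B).card : ℝ) = ((A ∪ B).card : ℝ) - ((A ∩ B).card : ℝ) := by
  have h : symmDiff A B = (A ∪ B) \ (A ∩ B) := by
    simp [symmDiff_eq_sup_sdiff_inf]
  rw [h, card_sdiff_of_subset (inter_subset_union)]
  have := card_le_card (inter_subset_union (s := A) (t := B))
  push_cast [Nat.cast_sub this]
  ring

theorem jaccard_dissimilarity_triangle {α : Type*} [DecidableEq α] (A B C : Finset α)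
    (hAB : (A ∪ B).Nonempty) (hBC : (B ∪ C).Nonempty) (hAC : (A ∪ C).Nonempty) :
    1 - (((A ∩ C).card : ℝ) / ((A ∪ C).card : ℝ)) ≤
      (1 - ((A ∩ B).card : ℝ) / ((A ∪ B).card : ℝ)) +
      (1 - ((B ∩ C).card : ℝ) / ((B ∪ C).card : ℝ)) := by
  have uAB : (0:ℝ) < (A ∪ B).card := by exact_mod_cast card_pos.mpr hAB
  have uBC : (0:ℝ) < (B ∪ C).card := by exact_mod_cast card_pos.mpr hBC
  have uAC : (0:ℝ) < (A ∪ C).card := by exact_mod_cast card_pos.mpr hAC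
  -- rewrite 1 - i/u as s/u with s = card of symm diff
  have e1 : 1 - ((A ∩ B).card : ℝ) / ((A ∪ B).card : ℝ) = ((symmDiff A B).card : ℝ) / ((A ∪ B).card : ℝ) := by
    rw [card_symmDiff_eq]; field_simp
  have e2 : 1 - ((B ∩ C).card : ℝ) / ((B ∪ C).card : ℝ) = ((symmDiff B C).card : ℝ) / ((B ∪ C).card : ℝ) := by
    rw [card_symmDiff_eq]; field_simp
  have e3 : 1 - ((A ∩ C).card : ℝ) / ((A ∪ C).card : ℝ) = ((symmDiff A C).card : ℝ) / ((A ∪ C).card : ℝ) := by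
    rw [card_symmDiff_eq]; field_simp
  rw [e1, e2, e3]
  -- key facts
  have tri : ((symmDiff A C).card : ℝ) ≤ ((symmDiff A B).card : ℝ) + ((symmDiff B C).card : ℝ) := by
    have h1 : symmDiff A C ⊆ (symmDiff A B) ∪ (symmDiff B C) := symmDiff_triangle A B C
    have := (card_le_card h1).trans (card_union_le _ _)
    exact_mod_cast this
  have hB1 : (B.card : ℝ) ≤ (A.card : ℝ) + ((symmDiff A B).card : ℝ) := by
    have h : B ⊆ A ∪ (symmDiff A B) := by
      intro x hx
      by_cases hxA : x ∈ A
      · exact mem_union_left _ hxA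
      · exact mem_union_right _ (by simp [Finset.mem_symmDiff, hx, hxA])
    have := (card_le_card h).trans (card_union_le _ _)
    exact_mod_cast this
  have hB2 : (B.card : ℝ) ≤ (C.card : ℝ) + ((symmDiff B C).card : ℝ) := by
    have h : B ⊆ C ∪ (symmDiff B C) := by
      intro x hx
      by_cases hxC : x ∈ C
      · exact mem_union_left _ hxC
      · exact mem_union_right _ (by simp [Finset.mem_symmDiff, hx, hxC])
    have := (card_le_card h).trans (card_union_le _ _)
    exact_mod_cast this
  -- 2 * card (X ∪ Y) = card X + card Y + card (X ∆ Y)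
  have u1 : 2 * ((A ∪ B).card : ℝ) = (A.card : ℝ) + B.card + (symmDiff A B).card := by
    have := Finset.card_inter_add_card_union A B
    have h2 := card_symmDiff_eq A B
    have : ((A ∩ B).card : ℝ) + ((A ∪ B).card : ℝ) = (A.card : ℝ) + B.card := by
      exact_mod_cast this
    linarith
  have u2 : 2 * ((B ∪ C).card : ℝ) = (B.card : ℝ) + C.card + (symmDiff B C).card := by
    have := Finset.card_inter_add_card_union B C
    have h2 := card_symmDiff_eq B C
    have : ((B ∩ C).card : ℝ) + ((B ∪ C).card : ℝ) = (B.card : ℝ) + C.card := by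
      exact_mod_cast this
    linarith
  have u3 : 2 * ((A ∪ C).card : ℝ) = (A.card : ℝ) + C.card + (symmDiff A C).card := by
    have := Finset.card_inter_add_card_union A C
    have h2 := card_symmDiff_eq A C
    have : ((A ∩ C).card : ℝ) + ((A ∪ C).card : ℝ) = (A.card : ℝ) + C.card := by
      exact_mod_cast this
    linarith
  have key := key_ineq ((symmDiff A B).card : ℝ) ((symmDiff B C).card : ℝ) ((symmDiff A C).card : ℝ)
    (A.card : ℝ) (B.card : ℝ) (C.card : ℝ)
    (by positivity) (by positivity) (by positivity) (by positivity) (by positivity)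
    tri hB2 hB1 (by linarith) (by linarith) (by linarith)
  have eq1 : (A.card : ℝ) + B.card + (symmDiff A B).card = 2 * ((A ∪ B).card : ℝ) := u1.symm
  calc ((symmDiff A C).card : ℝ) / ((A ∪ C).card : ℝ)
      = ((symmDiff A C).card : ℝ) / ((A.card : ℝ) + C.card + (symmDiff A C).card) * 2 := by
        rw [← u3]; field_simp
    _ ≤ (((symmDiff A B).card : ℝ) / ((A.card : ℝ) + B.card + (symmDiff A B).card)
        + ((symmDiff B C).card : ℝ) / ((B.card : ℝ) + C.card + (symmDiff B C).card)) * 2 := by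
        nlinarith [key]
    _ = ((symmDiff A B).card : ℝ) / ((A ∪ B).card : ℝ) + ((symmDiff B C).card : ℝ) / ((B ∪ C).card : ℝ) := by
        rw [eq1, ← u2]; field_simp
end
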